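/- arXiv:1008.3943 — 3 statements merged into one kernel-verified Lean document; each statement's English description precedes it below -/
import Mathlib

section
/- Let w be a nonnegative locally integrable function and let D' be a finite collection of dyadic subintervals of a fixed dyadic interval Q₀ with w(Q₀) > 0. Then there exists a corona decomposition of D' relative to w: a collection L of dyadic intervals containing Q₀ such that (i) whenever L' ⊊ L with L, L' ∈ L, one has w(L')/|L'| ≥ 4 w(L)/|L|, and (ii) for every I ∈ D', if Γ(I) denotes the minimal element of L containing I, then w(I)/|I| < 4 w(Γ(I))/|Γ(I)|. -/
open MeasureTheory Set

/-- The dyadic interval `[2^k m, 2^k (m+1))`. -/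
noncomputable def dyadicI (q : ℤ × ℤ) : Set ℝ := Set.Ico ((2:ℝ)^q.1 * q.2) ((2:ℝ)^q.1 * (q.2+1))

/-- `w(I) = ∫_I w` for a dyadic interval described by its parameters. -/
noncomputable def wInt (w : ℝ → ℝ) (q : ℤ × ℤ) : ℝ := ∫ x in dyadicI q, w x

/-- `|I| = 2^k` for the dyadic interval `dyadicI (k, m)`. -/
noncomputable def len (q : ℤ × ℤ) : ℝ := (2:ℝ)^q.1


/-- the dyadic parent -/
def dpar (q : ℤ × ℤ) : ℤ × ℤ := (q.1 + 1, q.2 / 2)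

lemma dyadic_lt (q : ℤ × ℤ) : (2:ℝ)^q.1 * q.2 < (2:ℝ)^q.1 * (q.2+1) := by
  have h : (0:ℝ) < 2^q.1 := zpow_pos (by norm_num) _
  nlinarith

lemma dyadic_sub_iff {q Q : ℤ × ℤ} :
    dyadicI q ⊆ dyadicI Q ↔ (2:ℝ)^Q.1 * Q.2 ≤ 2^q.1 * q.2 ∧ (2:ℝ)^q.1 * (q.2+1) ≤ 2^Q.1 * (Q.2+1) :=
  Set.Ico_subset_Ico_iff (dyadic_lt q)

lemma scale_le {q Q : ℤ × ℤ} (h : dyadicI q ⊆ dyadicI Q) : q.1 ≤ Q.1 := by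
  rw [dyadic_sub_iff] at h
  refine (zpow_le_zpow_iff_right₀ (by norm_num : (1:ℝ) < 2)).1 ?_
  nlinarith [h.1, h.2]

lemma eq_of_subset_of_scale_eq {q Q : ℤ × ℤ} (h : dyadicI q ⊆ dyadicI Q) (hk : q.1 = Q.1) :
    q = Q := by
  rw [dyadic_sub_iff, hk] at h
  have h2 : (0:ℝ) < 2^Q.1 := zpow_pos (by norm_num) _
  have e1 : (Q.2 : ℝ) ≤ q.2 := le_of_mul_le_mul_left (by linarith [h.1]) h2
  have e2 : (q.2 : ℝ) ≤ Q.2 := by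
    have := h.2; have : (q.2 : ℝ) + 1 ≤ Q.2 + 1 := le_of_mul_le_mul_left (by linarith) h2
    linarith
  have : q.2 = Q.2 := by exact_mod_cast le_antisymm e2 e1
  exact Prod.ext hk this

lemma scale_lt {q Q : ℤ × ℤ} (h : dyadicI q ⊆ dyadicI Q) (hq : q ≠ Q) : q.1 < Q.1 :=
  lt_of_le_of_ne (scale_le h) (fun he => hq (eq_of_subset_of_scale_eq h he))

lemma sub_dpar (q : ℤ × ℤ) : dyadicI q ⊆ dyadicI (dpar q) := by
  rw [dyadic_sub_iff]
  have h : (0:ℝ) < 2^q.1 := zpow_pos (by norm_num) _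
  have hd := Int.mul_ediv_add_emod q.2 2
  have hr0 : 0 ≤ q.2 % 2 := Int.emod_nonneg _ (by norm_num)
  have hr1 : q.2 % 2 < 2 := Int.emod_lt_of_pos _ (by norm_num)
  have hp : (2:ℝ)^(q.1+1) = 2^q.1 * 2 := by rw [zpow_add_one₀]; norm_num
  constructor
  · show (2:ℝ)^(q.1+1) * ((q.2/2 : ℤ) : ℝ) ≤ _
    rw [hp]
    have : (2:ℝ) * ((q.2/2 : ℤ) : ℝ) ≤ q.2 := by exact_mod_cast by omega
    nlinarith
  · show _ ≤ (2:ℝ)^(q.1+1) * (((q.2/2 : ℤ) : ℝ) + 1)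
    rw [hp]
    have : ((q.2:ℝ) + 1) ≤ 2 * (((q.2/2 : ℤ):ℝ) + 1) := by exact_mod_cast by omega
    nlinarith

lemma dpar_sub {q Q : ℤ × ℤ} (h : dyadicI q ⊆ dyadicI Q) (hk : q.1 < Q.1) :
    dyadicI (dpar q) ⊆ dyadicI Q := by
  rw [dyadic_sub_iff] at h ⊢
  have h2k : (0:ℝ) < 2^q.1 := zpow_pos (by norm_num) _
  set j : ℕ := (Q.1 - (q.1+1)).toNat with hj
  have hQ1 : Q.1 = (q.1 + 1) + (j : ℤ) := by omega
  have hpow : (2:ℝ)^Q.1 = 2^(q.1+1) * 2^j := by rw [hQ1, zpow_add₀ (by norm_num : (2:ℝ) ≠ 0), zpow_natCast]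
  have hp : (2:ℝ)^(q.1+1) = 2^q.1 * 2 := by rw [zpow_add_one₀]; norm_num
  have hjz : ((2^j : ℤ) : ℝ) = (2:ℝ)^j := by push_cast; ring
  -- lower endpoint
  have hlow : (2:ℤ)^j * Q.2 * 2 ≤ q.2 := by
    have h1 : (2:ℝ)^Q.1 * Q.2 ≤ 2^q.1 * q.2 := h.1
    rw [hpow, hp] at h1
    have key : (2:ℝ)^q.1 * ((2^j * Q.2 * 2 : ℤ) : ℝ) ≤ 2^q.1 * ((q.2 : ℤ) : ℝ) := by
      push_cast; ring_nf; ring_nf at h1; linarith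
    exact_mod_cast le_of_mul_le_mul_left key h2k
  have hup : (q.2 : ℤ) + 1 ≤ 2^j * (Q.2+1) * 2 := by
    have h1 : (2:ℝ)^q.1 * (q.2+1) ≤ 2^Q.1 * (Q.2+1) := h.2
    rw [hpow, hp] at h1
    have key : (2:ℝ)^q.1 * ((q.2 + 1 : ℤ) : ℝ) ≤ 2^q.1 * ((2^j * (Q.2+1) * 2 : ℤ) : ℝ) := by
      push_cast; ring_nf; ring_nf at h1; linarith
    exact_mod_cast le_of_mul_le_mul_left key h2k
  have hd1 : (2:ℤ)^j * Q.2 ≤ q.2 / 2 := (Int.le_ediv_iff_mul_le (by norm_num)).2 (by linarith)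
  have hd2 : q.2 / 2 + 1 ≤ 2^j * (Q.2+1) := by
    have : q.2 / 2 < 2^j * (Q.2+1) := (Int.ediv_lt_iff_lt_mul (by norm_num)).2 (by linarith)
    omega
  constructor
  · show (2:ℝ)^Q.1 * Q.2 ≤ (2:ℝ)^(q.1+1) * ((q.2/2 : ℤ) : ℝ)
    rw [hpow]
    have h2k1 : (0:ℝ) < 2^(q.1+1) := zpow_pos (by norm_num) _
    have : ((2:ℝ)^j) * Q.2 ≤ ((q.2/2 : ℤ) : ℝ) := by rw [← hjz]; exact_mod_cast hd1
    nlinarith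
  · show (2:ℝ)^(q.1+1) * (((q.2/2 : ℤ) : ℝ) + 1) ≤ (2:ℝ)^Q.1 * (Q.2+1)
    rw [hpow]
    have h2k1 : (0:ℝ) < 2^(q.1+1) := zpow_pos (by norm_num) _
    have : ((q.2/2 : ℤ) : ℝ) + 1 ≤ ((2:ℝ)^j) * (Q.2+1) := by
      rw [← hjz]; exact_mod_cast hd2
    nlinarith

lemma dyadicI_inj {q Q : ℤ × ℤ} (h : dyadicI q = dyadicI Q) : q = Q := by
  have h1 : q.1 ≤ Q.1 := scale_le h.subset
  have h2 : Q.1 ≤ q.1 := scale_le h.ge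
  exact eq_of_subset_of_scale_eq h.subset (le_antisymm h1 h2)

lemma len_pos (q : ℤ × ℤ) : 0 < len q := zpow_pos (by norm_num) _

section wfacts
variable {w : ℝ → ℝ} (hw : ∀ x, 0 ≤ w x) (hwl : LocallyIntegrable w volume)

include hw in
lemma wInt_nonneg (q : ℤ × ℤ) : 0 ≤ wInt w q :=
  setIntegral_nonneg measurableSet_Ico (fun x _ => hw x)

include hwl in
lemma wInt_integrableOn (q : ℤ × ℤ) : IntegrableOn w (dyadicI q) volume :=
  (hwl.integrableOn_isCompact isCompact_Icc).mono_set Set.Ico_subset_Icc_self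

include hw hwl in
lemma wInt_mono {q Q : ℤ × ℤ} (h : dyadicI q ⊆ dyadicI Q) : wInt w q ≤ wInt w Q := by
  refine setIntegral_mono_set (wInt_integrableOn hwl Q) ?_ (HasSubset.Subset.eventuallyLE h)
  exact Filter.Eventually.of_forall (fun x => hw x)

/-- density -/
noncomputable def dens (w : ℝ → ℝ) (q : ℤ × ℤ) : ℝ := wInt w q / len q

include hw in
lemma dens_nonneg (q : ℤ × ℤ) : 0 ≤ dens w q :=
  div_nonneg (wInt_nonneg hw q) (len_pos q).le

end wfacts

/-- stopping-time map with explicit fuel -/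
noncomputable def gam (w : ℝ → ℝ) (Q₀ : ℤ × ℤ) : ℕ → ℤ × ℤ → ℤ × ℤ
  | 0, _ => Q₀
  | n+1, q =>
    if q = Q₀ then Q₀ else
      if 4 * dens w (gam w Q₀ n (dpar q)) ≤ dens w q then q else gam w Q₀ n (dpar q)

noncomputable def Gam (w : ℝ → ℝ) (Q₀ q : ℤ × ℤ) : ℤ × ℤ := gam w Q₀ (Q₀.1 - q.1).toNat q

lemma Gam_self (w : ℝ → ℝ) (Q₀ : ℤ × ℤ) : Gam w Q₀ Q₀ = Q₀ := by
  unfold Gam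
  simp [gam]

lemma Gam_eq {w : ℝ → ℝ} {Q₀ q : ℤ × ℤ} (h : dyadicI q ⊆ dyadicI Q₀) (hq : q ≠ Q₀) :
    Gam w Q₀ q =
      if 4 * dens w (Gam w Q₀ (dpar q)) ≤ dens w q then q else Gam w Q₀ (dpar q) := by
  have hk : q.1 < Q₀.1 := scale_lt h hq
  have h1 : (Q₀.1 - q.1).toNat = (Q₀.1 - (dpar q).1).toNat + 1 := by
    simp only [dpar]; omega
  unfold Gam
  rw [h1]
  simp [gam, hq]

lemma dpar_ne (q : ℤ × ℤ) : dyadicI q ≠ dyadicI (dpar q) := by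
  intro h
  have h2 := dyadicI_inj h
  have h3 := congrArg Prod.fst h2
  simp [dpar] at h3

section main
variable {w : ℝ → ℝ} {Q₀ : ℤ × ℤ}
  (hw : ∀ x, 0 ≤ w x) (hwl : LocallyIntegrable w volume)

lemma gam_basic : ∀ n : ℕ, ∀ q : ℤ × ℤ, (Q₀.1 - q.1).toNat = n →
    dyadicI q ⊆ dyadicI Q₀ →
    dyadicI q ⊆ dyadicI (Gam w Q₀ q) ∧ dyadicI (Gam w Q₀ q) ⊆ dyadicI Q₀ ∧
      Gam w Q₀ (Gam w Q₀ q) = Gam w Q₀ q ∧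
      (Gam w Q₀ q = q ∨ dens w q < 4 * dens w (Gam w Q₀ q)) := by
  intro n
  induction n with
  | zero =>
    intro q hn h
    have hq : q = Q₀ := eq_of_subset_of_scale_eq h (by have := scale_le h; omega)
    subst hq
    rw [Gam_self]
    exact ⟨subset_rfl, subset_rfl, Gam_self _ _, Or.inl rfl⟩
  | succ n ih =>
    intro q hn h
    by_cases hq : q = Q₀
    · subst hq
      rw [Gam_self]
      exact ⟨subset_rfl, subset_rfl, Gam_self _ _, Or.inl rfl⟩
    · have hk : q.1 < Q₀.1 := scale_lt h hq
      have hpn : (Q₀.1 - (dpar q).1).toNat = n := by simp only [dpar]; omega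
      have hpsub : dyadicI (dpar q) ⊆ dyadicI Q₀ := dpar_sub h hk
      obtain ⟨ih1, ih2, ih3, _⟩ := ih (dpar q) hpn hpsub
      rw [Gam_eq h hq]
      split_ifs with hcond
      · exact ⟨subset_rfl, h, by rw [Gam_eq h hq, if_pos hcond], Or.inl rfl⟩
      · exact ⟨(sub_dpar q).trans ih1, ih2, ih3, Or.inr (by push_neg at hcond; linarith)⟩

include hw hwl in
lemma gam_min : ∀ n : ℕ, ∀ q L : ℤ × ℤ, (Q₀.1 - q.1).toNat = n →
    dyadicI q ⊆ dyadicI Q₀ → dyadicI L ⊆ dyadicI Q₀ → Gam w Q₀ L = L →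
    dyadicI q ⊆ dyadicI L →
    dyadicI (Gam w Q₀ q) ⊆ dyadicI L ∧ dens w L ≤ dens w (Gam w Q₀ q) := by
  intro n
  induction n with
  | zero =>
    intro q L hn h hL hfix hqL
    have hq : q = Q₀ := eq_of_subset_of_scale_eq h (by have := scale_le h; omega)
    rw [hq] at hqL ⊢
    have hLQ : L = Q₀ := dyadicI_inj (Subset.antisymm hL hqL)
    rw [hLQ, Gam_self]
    exact ⟨subset_rfl, le_rfl⟩
  | succ n ih =>
    intro q L hn h hL hfix hqL
    by_cases hq : q = Q₀
    · rw [hq] at hqL ⊢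
      have hLQ : L = Q₀ := dyadicI_inj (Subset.antisymm hL hqL)
      rw [hLQ, Gam_self]
      exact ⟨subset_rfl, le_rfl⟩
    · by_cases hqL' : q = L
      · subst hqL'
        rw [hfix]
        exact ⟨hqL, le_rfl⟩
      · have hk : q.1 < Q₀.1 := scale_lt h hq
        have hkL : q.1 < L.1 := scale_lt hqL hqL'
        have hpn : (Q₀.1 - (dpar q).1).toNat = n := by simp only [dpar]; omega
        have hpsub : dyadicI (dpar q) ⊆ dyadicI Q₀ := dpar_sub h hk
        have hpL : dyadicI (dpar q) ⊆ dyadicI L := dpar_sub hqL hkL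
        obtain ⟨ih1, ih2⟩ := ih (dpar q) L hpn hpsub hL hfix hpL
        rw [Gam_eq h hq]
        split_ifs with hcond
        · refine ⟨hqL, ?_⟩
          have h0 : 0 ≤ dens w (Gam w Q₀ (dpar q)) := dens_nonneg hw _
          linarith
        · exact ⟨ih1, ih2⟩

end main

/-- Existence of a corona decomposition relative to `w` of a finite family `D'` of
dyadic subintervals of a fixed dyadic `Q₀` with `w(Q₀) > 0`: a stopping collection
`𝓛 ∋ Q₀` of dyadic subintervals of `Q₀` such that (i) strictly nested members have
density increased by a factor at least 4, and (ii) every `I ∈ D'` has a minimal member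
`Γ(I)` of `𝓛` containing it, with `w(I)/|I| < 4 w(Γ(I))/|Γ(I)|`. -/
theorem stmt12 (w : ℝ → ℝ) (hw : ∀ x, 0 ≤ w x) (hwl : LocallyIntegrable w volume)
    (Q₀ : ℤ × ℤ) (D' : Finset (ℤ × ℤ))
    (hD' : ∀ q ∈ D', dyadicI q ⊆ dyadicI Q₀)
    (hQ₀ : 0 < wInt w Q₀) :
    ∃ 𝓛 : Set (ℤ × ℤ),
      Q₀ ∈ 𝓛 ∧
      (∀ L ∈ 𝓛, dyadicI L ⊆ dyadicI Q₀) ∧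
      (∀ L ∈ 𝓛, ∀ L' ∈ 𝓛, dyadicI L' ⊂ dyadicI L →
        4 * (wInt w L / len L) ≤ wInt w L' / len L') ∧
      (∀ I ∈ D', ∃ L ∈ 𝓛, dyadicI I ⊆ dyadicI L ∧
        (∀ L' ∈ 𝓛, dyadicI I ⊆ dyadicI L' → dyadicI L ⊆ dyadicI L') ∧
        wInt w I / len I < 4 * (wInt w L / len L)) := by
  refine ⟨{L | dyadicI L ⊆ dyadicI Q₀ ∧ Gam w Q₀ L = L}, ⟨subset_rfl, Gam_self w Q₀⟩,
    fun L hL => hL.1, ?_, ?_⟩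
  · intro L hL L' hL' hss
    have hne : L' ≠ L := by rintro rfl; exact hss.ne rfl
    have hq0 : L' ≠ Q₀ := by rintro rfl; exact hss.not_subset hL.1
    have hGam := Gam_eq (w := w) hL'.1 hq0
    rw [hL'.2] at hGam
    have hkQ : L'.1 < Q₀.1 := scale_lt hL'.1 hq0
    have hpsub : dyadicI (dpar L') ⊆ dyadicI Q₀ := dpar_sub hL'.1 hkQ
    by_cases hcond : 4 * dens w (Gam w Q₀ (dpar L')) ≤ dens w L'
    · have hneL : L'.1 < L.1 := scale_lt hss.subset hne
      have hpL : dyadicI (dpar L') ⊆ dyadicI L := dpar_sub hss.subset hneL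
      obtain ⟨_, hdens⟩ := gam_min hw hwl _ (dpar L') L rfl hpsub hL.1 hL.2 hpL
      have h4 : 4 * dens w L ≤ dens w L' := by linarith
      exact h4
    · rw [if_neg hcond] at hGam
      obtain ⟨b1, _, _, _⟩ := gam_basic (w := w) _ (dpar L') rfl hpsub
      rw [← hGam] at b1
      exact absurd (Subset.antisymm (sub_dpar L') b1) (dpar_ne L')
  · intro I hI
    have hIs := hD' I hI
    obtain ⟨b1, b2, b3, b4⟩ := gam_basic (w := w) _ I rfl hIs
    refine ⟨Gam w Q₀ I, ⟨b2, b3⟩, b1, ?_, ?_⟩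
    · intro L' hL' hIL'
      exact (gam_min hw hwl _ I L' rfl hIs hL'.1 hL'.2 hIL').1
    · have hQd : 0 < dens w Q₀ := div_pos hQ₀ (len_pos Q₀)
      have hmin := (gam_min hw hwl _ I Q₀ rfl hIs subset_rfl (Gam_self w Q₀) hIs).2
      have hpos : 0 < dens w (Gam w Q₀ I) := lt_of_lt_of_le hQd hmin
      cases b4 with
      | inl he =>
        rw [he] at hpos ⊢
        have hd : dens w I = wInt w I / len I := rfl
        rw [hd] at hpos
        linarith
      | inr hlt => exact hlt
end

section
/- In the inductive construction, for each j ≥ 0 and each stopping interval L ∈ L_j, the total measure is preserved when passing to the next stage: μ_{j+1}(L) = μ_j(L). Consequently μ_i(L) = μ_j(L) for all i ≥ j. -/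
open MeasureTheory Set

/-- The `i`-th interval `I_i` of the chain `Ξ_L` of the dyadic interval `L = dyadicI q`:
the unique dyadic interval of length `4^{-i}|L|` inside `L` containing the jumping
point `jp(L)` in its left half. -/
def chainI (q : ℤ × ℤ) (i : ℕ) : ℤ × ℤ := (q.1 - 2*i, 4^i * q.2 + (4^i - 1)/3)

/-- The element `I_i⁺` of `Ξ_L⁺`: the right half of `I_i`. -/
def xiPlus (q : ℤ × ℤ) (i : ℕ) : ℤ × ℤ := ((chainI q i).1 - 1, 2 * (chainI q i).2 + 1)

/-- `L'(I_i⁺) = (I_i⁺)^{--}`, the left half of the left half of `I_i⁺`. -/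
def Lprime (q : ℤ × ℤ) (i : ℕ) : ℤ × ℤ := ((chainI q i).1 - 3, 4 * (2 * (chainI q i).2 + 1))

/-- The generations `𝓛_j` of stopping intervals of the inductive construction:
`𝓛_0 = {[0,1)}` and `𝓛_{j+1} = ⋃_{L ∈ 𝓛_j} {L'(I) : I ∈ Ξ_L⁺}`. -/
noncomputable def Lgen (k : ℕ) : ℕ → Finset (ℤ × ℤ)
  | 0 => {((0:ℤ), (0:ℤ))}
  | j+1 => (Lgen k j).biUnion (fun q => (Finset.range (2*k)).image (Lprime q))

/-- The support `[jp(K), rep(K))` of the measure `μ_K^λ` (the right two thirds of `K`). -/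
noncomputable def suppOf (q : ℤ × ℤ) : Set ℝ :=
  Set.Ico ((2:ℝ)^q.1 * q.2 + (2:ℝ)^q.1 / 3) ((2:ℝ)^q.1 * (q.2+1))

/-- The density of the stage-`j` measure `μ_j` of the inductive construction:
`μ_j = ∑_{i=0}^{j-1} ∑_{L ∈ 𝓛_i} μ_{I(L)}^{6^i} + ∑_{L' ∈ 𝓛_j} μ_{L'}^{6^j}`,
where `I(L) = chainI L (2k)` is the minimal element of `Ξ_L`. -/
noncomputable def muDensity (k j : ℕ) (x : ℝ) : ℝ :=
  (∑ i ∈ Finset.range j,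
    (6:ℝ)^i * Set.indicator (⋃ q ∈ Lgen k i, suppOf (chainI q (2*k))) (fun _ => 1) x)
  + (6:ℝ)^j * Set.indicator (⋃ q ∈ Lgen k j, suppOf q) (fun _ => 1) x

open scoped Classical

set_option linter.unusedVariables false

-- arithmetic
lemma three_dvd_pow4_sub_one (i : ℕ) : (3:ℤ) ∣ 4^i - 1 := by
  induction i with
  | zero => simp
  | succ n ih =>
    have h : (4:ℤ)^(n+1) - 1 = 4*(4^n - 1) + 3 := by ring
    rw [h]
    exact dvd_add (ih.mul_left 4) ⟨1, by ring⟩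

lemma tdiv_eq (i : ℕ) : (3:ℤ) * ((4^i - 1)/3) = 4^i - 1 :=
  Int.mul_ediv_cancel' (three_dvd_pow4_sub_one i)

lemma chainI_zero (q : ℤ × ℤ) : chainI q 0 = q := by
  simp [chainI]

lemma chainI_succ (q : ℤ × ℤ) (i : ℕ) :
    chainI q (i+1) = ((chainI q i).1 - 2, 4 * (chainI q i).2 + 1) := by
  unfold chainI
  refine Prod.ext ?_ ?_
  · simp; ring
  · simp only
    have h1 := tdiv_eq i
    have h2 := tdiv_eq (i+1)
    have h4 : (4:ℤ)^(i+1) = 4 * 4^i := by ring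
    have h5 : (4:ℤ)^(i+1) * q.2 = 4*(4^i*q.2) := by ring
    omega

lemma two_zpow_pos (a : ℤ) : (0:ℝ) < (2:ℝ)^a := by positivity

lemma two_zpow_mul (a : ℤ) (e : ℕ) : (2:ℝ)^(a + (e:ℤ)) = (2:ℝ)^a * 2^e := by
  rw [zpow_add₀ (by norm_num : (2:ℝ) ≠ 0), zpow_natCast]

lemma scale_le_s15 (a : ℤ) {x y : ℤ} (h : x ≤ y) : (2:ℝ)^a * x ≤ (2:ℝ)^a * y :=
  mul_le_mul_of_nonneg_left (by exact_mod_cast h) (two_zpow_pos a).le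

lemma dyadic_subset {a m b n : ℤ} {e : ℕ} (he : b = a + e)
    (h1 : 2^e * n ≤ m) (h2 : m + 1 ≤ 2^e * (n+1)) :
    dyadicI (a, m) ⊆ dyadicI (b, n) := by
  have hb : ∀ x : ℤ, (2:ℝ)^b * x = (2:ℝ)^a * ((2^e * x : ℤ) : ℝ) := by
    intro x; rw [he, two_zpow_mul]; push_cast; ring
  apply Set.Ico_subset_Ico
  · rw [show ((n:ℝ)) = (((n:ℤ)):ℝ) from rfl, hb n]
    exact scale_le_s15 a h1
  · have : ((m:ℝ)+1) = (((m+1:ℤ)):ℝ) := by push_cast; ring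
    rw [this, show ((n:ℝ)+1) = (((n+1:ℤ)):ℝ) from by push_cast; ring, hb (n+1)]
    exact scale_le_s15 a h2

lemma dyadic_disjoint_left {a m b n : ℤ} (h : (2:ℝ)^a * (m+1) ≤ (2:ℝ)^b * n) :
    Disjoint (dyadicI (a,m)) (dyadicI (b,n)) := by
  rw [dyadicI, dyadicI, Set.Ico_disjoint_Ico]
  exact le_trans (min_le_left _ _) (h.trans (le_max_right _ _))

lemma dyadic_nested_or_disjoint {a m b n : ℤ} {e : ℕ} (he : b = a + e) :
    dyadicI (a,m) ⊆ dyadicI (b,n) ∨ Disjoint (dyadicI (a,m)) (dyadicI (b,n)) := by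
  by_cases h1 : 2^e * n ≤ m
  · by_cases h2 : m + 1 ≤ 2^e * (n+1)
    · exact Or.inl (dyadic_subset he h1 h2)
    · right
      push_neg at h2
      have h2' : 2^e * (n+1) ≤ m := by omega
      refine (dyadic_disjoint_left ?_).symm
      have hb : (2:ℝ)^b * (n+1) = (2:ℝ)^a * ((2^e * (n+1) : ℤ) : ℝ) := by
        rw [he, two_zpow_mul]; push_cast; ring
      calc (2:ℝ)^b * (n+1) = (2:ℝ)^a * ((2^e * (n+1) : ℤ) : ℝ) := hb
        _ ≤ (2:ℝ)^a * m := scale_le_s15 a h2'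
  · push_neg at h1
    right
    apply dyadic_disjoint_left
    have h1' : m + 1 ≤ 2^e * n := by omega
    have hb : (2:ℝ)^b * n = (2:ℝ)^a * ((2^e * n : ℤ) : ℝ) := by
      rw [he, two_zpow_mul]; push_cast; ring
    calc (2:ℝ)^a * (m+1) = (2:ℝ)^a * (((m+1:ℤ)):ℝ) := by push_cast; ring
      _ ≤ (2:ℝ)^a * ((2^e * n : ℤ):ℝ) := scale_le_s15 a h1'
      _ = (2:ℝ)^b * n := hb.symm

lemma dyadicI_nonempty (p : ℤ × ℤ) : (dyadicI p).Nonempty := by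
  rw [dyadicI, Set.nonempty_Ico]
  have := two_zpow_pos p.1
  have : (p.2:ℝ) < (p.2:ℝ) + 1 := by linarith
  nlinarith [two_zpow_pos p.1]

-- S2: chain step
lemma chain_step_subset (q : ℤ × ℤ) (i : ℕ) :
    dyadicI (chainI q (i+1)) ⊆ dyadicI (chainI q i) := by
  rw [chainI_succ]
  have h := dyadic_subset (a := (chainI q i).1 - 2) (m := 4 * (chainI q i).2 + 1)
    (b := (chainI q i).1) (n := (chainI q i).2) (e := 2) (by push_cast; ring)
    (by ring_nf; omega) (by ring_nf; omega)
  simpa using h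

-- S3: chain monotone
lemma chain_mono (q : ℤ × ℤ) {i i' : ℕ} (h : i ≤ i') :
    dyadicI (chainI q i') ⊆ dyadicI (chainI q i) := by
  induction i', h using Nat.le_induction with
  | base => exact subset_rfl
  | succ n hn ih => exact (chain_step_subset q n).trans ih

lemma chain_subset (q : ℤ × ℤ) (i : ℕ) : dyadicI (chainI q i) ⊆ dyadicI q := by
  have := chain_mono q (Nat.zero_le i)
  rwa [chainI_zero] at this

-- S4
lemma xiPlus_subset_chain (q : ℤ × ℤ) (i : ℕ) :
    dyadicI (xiPlus q i) ⊆ dyadicI (chainI q i) := by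
  unfold xiPlus
  have h := dyadic_subset (a := (chainI q i).1 - 1) (m := 2 * (chainI q i).2 + 1)
    (b := (chainI q i).1) (n := (chainI q i).2) (e := 1) (by push_cast; ring)
    (by ring_nf; omega) (by ring_nf; omega)
  simpa using h

-- S5
lemma Lprime_subset_xiPlus (q : ℤ × ℤ) (i : ℕ) :
    dyadicI (Lprime q i) ⊆ dyadicI (xiPlus q i) := by
  unfold Lprime xiPlus
  have h := dyadic_subset (a := (chainI q i).1 - 3) (m := 4 * (2 * (chainI q i).2 + 1))
    (b := (chainI q i).1 - 1) (n := 2 * (chainI q i).2 + 1) (e := 2) (by push_cast; ring)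
    (by ring_nf; omega) (by ring_nf; omega)
  simpa using h

-- S6
lemma Lprime_subset (q : ℤ × ℤ) (i : ℕ) : dyadicI (Lprime q i) ⊆ dyadicI q :=
  (Lprime_subset_xiPlus q i).trans ((xiPlus_subset_chain q i).trans (chain_subset q i))

-- S7
lemma disj_chainSucc_xiPlus (q : ℤ × ℤ) (i : ℕ) :
    Disjoint (dyadicI (chainI q (i+1))) (dyadicI (xiPlus q i)) := by
  rw [chainI_succ]
  unfold xiPlus
  apply dyadic_disjoint_left
  set A := (chainI q i).1
  set M := (chainI q i).2
  have hA : (2:ℝ)^(A - 1) = (2:ℝ)^(A-2) * 2 := by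
    rw [show A - 1 = (A - 2) + (1:ℕ) from by push_cast; ring, two_zpow_mul]; norm_num
  rw [hA]
  push_cast
  ring_nf
  nlinarith [two_zpow_pos (A-2)]

-- S8
lemma disj_chain_xiPlus (q : ℤ × ℤ) {t i' : ℕ} (h : t < i') :
    Disjoint (dyadicI (chainI q i')) (dyadicI (xiPlus q t)) :=
  Disjoint.mono_left (chain_mono q h) (disj_chainSucc_xiPlus q t)

-- S9
lemma sibling_disjoint (q : ℤ × ℤ) {t t' : ℕ} (h : t < t') :
    Disjoint (dyadicI (Lprime q t)) (dyadicI (Lprime q t')) := by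
  have h1 : dyadicI (Lprime q t') ⊆ dyadicI (chainI q t') :=
    (Lprime_subset_xiPlus q t').trans (xiPlus_subset_chain q t')
  exact Disjoint.mono (Lprime_subset_xiPlus q t)
    h1 ((disj_chain_xiPlus q h).symm)

-- S10
lemma Lprime_disjoint_chain (q : ℤ × ℤ) {t i' : ℕ} (h : t < i') :
    Disjoint (dyadicI (Lprime q t)) (dyadicI (chainI q i')) :=
  Disjoint.mono_left (Lprime_subset_xiPlus q t) (disj_chain_xiPlus q h).symm

-- S11
lemma suppOf_subset (p : ℤ × ℤ) : suppOf p ⊆ dyadicI p := by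
  rw [suppOf, dyadicI]
  exact Set.Ico_subset_Ico (by nlinarith [two_zpow_pos p.1]) le_rfl
lemma mem_Lgen_succ {k j : ℕ} {r : ℤ × ℤ} :
    r ∈ Lgen k (j+1) ↔ ∃ s ∈ Lgen k j, ∃ t < 2*k, r = Lprime s t := by
  simp only [Lgen, Finset.mem_biUnion, Finset.mem_image, Finset.mem_range]
  constructor
  · rintro ⟨s, hs, t, ht, rfl⟩; exact ⟨s, hs, t, ht, rfl⟩
  · rintro ⟨s, hs, t, ht, rfl⟩; exact ⟨s, hs, t, ht, rfl⟩

-- G1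
lemma Lgen_pairwise (k j : ℕ) :
    ∀ p ∈ Lgen k j, ∀ p' ∈ Lgen k j, p ≠ p' → Disjoint (dyadicI p) (dyadicI p') := by
  induction j with
  | zero =>
    intro p hp p' hp' hne
    simp only [Lgen, Finset.mem_singleton] at hp hp'
    exact absurd (hp.trans hp'.symm) hne
  | succ n ih =>
    intro p hp p' hp' hne
    obtain ⟨s, hs, t, ht, rfl⟩ := mem_Lgen_succ.1 hp
    obtain ⟨s', hs', t', ht', rfl⟩ := mem_Lgen_succ.1 hp'
    by_cases hss : s = s'
    · subst hss
      rcases lt_trichotomy t t' with h | h | h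
      · exact sibling_disjoint s h
      · exact absurd (by rw [h]) hne
      · exact (sibling_disjoint s h).symm
    · exact Disjoint.mono (Lprime_subset s t) (Lprime_subset s' t') (ih s hs s' hs' hss)

-- G2
lemma Lgen_nested {k j : ℕ} {q : ℤ × ℤ} (hq : q ∈ Lgen k j) :
    ∀ i, j ≤ i → ∀ r ∈ Lgen k i, dyadicI r ⊆ dyadicI q ∨ Disjoint (dyadicI r) (dyadicI q) := by
  intro i hi
  induction i, hi using Nat.le_induction with
  | base =>
    intro r hr
    by_cases h : r = q
    · subst h; exact Or.inl subset_rfl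
    · exact Or.inr (Lgen_pairwise k j r hr q hq h)
  | succ n hn ih =>
    intro r hr
    obtain ⟨s, hs, t, ht, rfl⟩ := mem_Lgen_succ.1 hr
    rcases ih s hs with h | h
    · exact Or.inl ((Lprime_subset s t).trans h)
    · exact Or.inr (h.mono_left (Lprime_subset s t))

-- G3
lemma Lgen_disj_minchain {k j : ℕ} {q : ℤ × ℤ} (hq : q ∈ Lgen k j) :
    ∀ i, j < i → ∀ r ∈ Lgen k i, Disjoint (dyadicI r) (dyadicI (chainI q (2*k))) := by
  intro i hi
  induction i, hi using Nat.le_induction with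
  | base =>
    intro r hr
    obtain ⟨s, hs, t, ht, rfl⟩ := mem_Lgen_succ.1 hr
    by_cases hsq : s = q
    · subst hsq; exact Lprime_disjoint_chain s ht
    · exact Disjoint.mono (Lprime_subset s t) (chain_subset q (2*k))
        (Lgen_pairwise k j s hs q hq hsq)
  | succ n hn ih =>
    intro r hr
    obtain ⟨s, hs, t, ht, rfl⟩ := mem_Lgen_succ.1 hr
    exact (ih s hs).mono_left (Lprime_subset s t)
lemma measurable_finUnion {s : Finset (ℤ × ℤ)} (f : ℤ × ℤ → Set ℝ)
    (hf : ∀ r, MeasurableSet (f r)) : MeasurableSet (⋃ r ∈ s, f r) :=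
  s.measurableSet_biUnion (fun b _ => hf b)

lemma measurable_suppOf (p : ℤ × ℤ) : MeasurableSet (suppOf p) := measurableSet_Ico

lemma vol_suppOf (p : ℤ × ℤ) :
    volume (suppOf p) = ENNReal.ofReal ((2:ℝ)^p.1 * (2/3)) := by
  rw [suppOf, Real.volume_Ico]
  congr 1
  ring

lemma vol_dyadicI_lt_top (p : ℤ × ℤ) : volume (dyadicI p) < ⊤ := by
  rw [dyadicI]; exact measure_Ico_lt_top

lemma integral_ind_one {S L : Set ℝ} (hS : MeasurableSet S) :
    ∫ x in L, S.indicator (fun _ => (1:ℝ)) x = (volume (S ∩ L)).toReal := by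
  rw [setIntegral_indicator hS]
  simp [Set.inter_comm]
  rfl

lemma integrableOn_ind {S L : Set ℝ} (hS : MeasurableSet S) (hL : volume L < ⊤) :
    IntegrableOn (fun x => S.indicator (fun _ => (1:ℝ)) x) L := by
  have : IntegrableOn (fun _ => (1:ℝ)) S (volume.restrict L) := by
    refine integrableOn_const (ne_of_lt ?_)
    calc (volume.restrict L) S = volume (S ∩ L) := Measure.restrict_apply hS
      _ ≤ volume L := measure_mono Set.inter_subset_right
      _ < ⊤ := hL
  exact (integrable_indicator_iff hS).2 this

lemma integrableOn_muDensity (k i : ℕ) {L : Set ℝ} (hL : volume L < ⊤) :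
    IntegrableOn (muDensity k i) L := by
  unfold muDensity
  apply Integrable.add
  · apply integrable_finset_sum
    intro i' _
    exact ((integrableOn_ind (measurable_finUnion _ (fun r => measurable_suppOf _)) hL).const_mul _)
  · exact ((integrableOn_ind (measurable_finUnion _ (fun r => measurable_suppOf _)) hL).const_mul _)

-- key counting lemma
lemma vol_inter_sum {k j i : ℕ} {q : ℤ × ℤ} (hq : q ∈ Lgen k j) (hij : j ≤ i)
    (f : ℤ × ℤ → Set ℝ) (hfs : ∀ r, f r ⊆ dyadicI r) (hfm : ∀ r, MeasurableSet (f r)) :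
    volume ((⋃ r ∈ Lgen k i, f r) ∩ dyadicI q)
      = ∑ r ∈ (Lgen k i).filter (fun r => dyadicI r ⊆ dyadicI q), volume (f r) := by
  have hU : (⋃ r ∈ Lgen k i, f r) ∩ dyadicI q
      = ⋃ r ∈ (Lgen k i).filter (fun r => dyadicI r ⊆ dyadicI q), f r := by
    ext x
    simp only [Set.mem_inter_iff, Set.mem_iUnion, Finset.mem_filter, exists_prop]
    constructor
    · rintro ⟨⟨r, hr, hx⟩, hxq⟩
      refine ⟨r, ⟨hr, ?_⟩, hx⟩
      rcases Lgen_nested hq i hij r hr with h | h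
      · exact h
      · exact absurd hxq (Set.disjoint_left.mp h (hfs r hx))
    · rintro ⟨r, ⟨hr, hsub⟩, hx⟩
      exact ⟨⟨r, hr, hx⟩, hsub (hfs r hx)⟩
  rw [hU]
  apply measure_biUnion_finset
  · intro r hr r' hr' hne
    simp only [Finset.coe_filter, Set.mem_setOf_eq] at hr hr'
    exact Disjoint.mono (hfs r) (hfs r') (Lgen_pairwise k i r hr.1 r' hr'.1 hne)
  · exact fun b _ => hfm b

lemma Lprime_fst (s : ℤ × ℤ) (t : ℕ) : (Lprime s t).1 = s.1 - 2*t - 3 := by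
  simp [Lprime, chainI]

-- filter at level i+1 decomposes over filter at level i
lemma filter_succ_sum {k j i : ℕ} {q : ℤ × ℤ} (hq : q ∈ Lgen k j) (hij : j ≤ i) :
    ∑ r ∈ (Lgen k (i+1)).filter (fun r => dyadicI r ⊆ dyadicI q), volume (suppOf r)
    = ∑ s ∈ (Lgen k i).filter (fun r => dyadicI r ⊆ dyadicI q),
        ∑ t ∈ Finset.range (2*k), volume (suppOf (Lprime s t)) := by
  have hD : (Lgen k (i+1)).filter (fun r => dyadicI r ⊆ dyadicI q)
      = ((Lgen k i).filter (fun r => dyadicI r ⊆ dyadicI q)).biUnion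
          (fun s => (Finset.range (2*k)).image (Lprime s)) := by
    ext r
    simp only [Finset.mem_filter, Finset.mem_biUnion, Finset.mem_image, Finset.mem_range]
    constructor
    · rintro ⟨hr, hsub⟩
      obtain ⟨s, hs, t, ht, rfl⟩ := mem_Lgen_succ.1 hr
      refine ⟨s, ⟨hs, ?_⟩, t, ht, rfl⟩
      rcases Lgen_nested hq i hij s hs with h | h
      · exact h
      · obtain ⟨x, hx⟩ := dyadicI_nonempty (Lprime s t)
        exact absurd (hsub hx) (Set.disjoint_left.mp h (Lprime_subset s t hx))
    · rintro ⟨s, ⟨hs, hsub⟩, t, ht, rfl⟩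
      exact ⟨mem_Lgen_succ.2 ⟨s, hs, t, ht, rfl⟩, (Lprime_subset s t).trans hsub⟩
  rw [hD, Finset.sum_biUnion]
  · apply Finset.sum_congr rfl
    intro s _
    rw [Finset.sum_image]
    intro t ht t' ht' h
    have h1 := congrArg Prod.fst h
    rw [Lprime_fst, Lprime_fst] at h1
    omega
  · intro s hs s' hs' hne
    simp only [Finset.coe_filter, Set.mem_setOf_eq] at hs hs'
    simp only [Finset.disjoint_left, Finset.mem_image, Finset.mem_range]
    rintro r ⟨t, ht, rfl⟩ ⟨t', ht', heq⟩
    obtain ⟨x, hx⟩ := dyadicI_nonempty (Lprime s t)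
    have hx' : x ∈ dyadicI (Lprime s' t') := by rw [heq]; exact hx
    exact Set.disjoint_left.mp (Lgen_pairwise k i s hs.1 s' hs'.1 hne)
      (Lprime_subset s t hx) (Lprime_subset s' t' hx')
lemma vol_suppOf_toReal (p : ℤ × ℤ) :
    (volume (suppOf p)).toReal = (2:ℝ)^p.1 * (2/3) := by
  rw [vol_suppOf, ENNReal.toReal_ofReal (by positivity)]

lemma chainI_fst (r : ℤ × ℤ) (k : ℕ) : (chainI r (2*k)).1 = r.1 - 4*(k:ℤ) := by
  simp [chainI]; ring

lemma per_r (k i : ℕ) (r : ℤ × ℤ) :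
    (6:ℝ)^i * (volume (suppOf (chainI r (2*k)))).toReal
      + (6:ℝ)^(i+1) * ∑ t ∈ Finset.range (2*k), (volume (suppOf (Lprime r t))).toReal
      - (6:ℝ)^i * (volume (suppOf r)).toReal = 0 := by
  have h2 : (2:ℝ) ≠ 0 := two_ne_zero
  simp only [vol_suppOf_toReal, Lprime_fst, chainI_fst]
  set a := r.1 with ha
  have eA : (2:ℝ)^(a - 4*(k:ℤ)) = 2^a * ((2:ℝ)^(4*k:ℕ))⁻¹ := by
    rw [zpow_sub₀ h2, div_eq_mul_inv]
    congr 2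
  have eL : ∀ t ∈ Finset.range (2*k),
      (2:ℝ)^(a - 2*(t:ℤ) - 3) * (2/3) = ((2:ℝ)^a * (2/3) * (1/8)) * ((1/4:ℝ))^t := by
    intro t _
    rw [show a - 2*(t:ℤ) - 3 = a - ((2*t+3 : ℕ):ℤ) by push_cast; ring,
      zpow_sub₀ h2, zpow_natCast, pow_add, pow_mul]
    have h4 : ((2:ℝ)^2) = 4 := by norm_num
    rw [h4]
    have h4t : (0:ℝ) < 4^t := by positivity
    field_simp
    rw [mul_comm, ← mul_assoc, ← mul_pow]; norm_num
  rw [Finset.sum_congr rfl eL, ← Finset.mul_sum,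
    geom_sum_eq (by norm_num : (1/4:ℝ) ≠ 1)]
  have eX : ((1/4:ℝ))^(2*k) = ((2:ℝ)^(4*k:ℕ))⁻¹ := by
    rw [one_div, inv_pow]
    congr 1
    rw [show (4:ℝ) = 2^2 by norm_num, ← pow_mul]
    ring_nf
  rw [eA, eX]
  ring

lemma key (k : ℕ) {j i : ℕ} (hij : j ≤ i) {q : ℤ × ℤ} (hq : q ∈ Lgen k j) :
    (∫ x in dyadicI q, muDensity k (i+1) x) = (∫ x in dyadicI q, muDensity k i x) := by
  have hLfin := vol_dyadicI_lt_top q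
  set L := dyadicI q with hLdef
  set A : Set ℝ := ⋃ r ∈ Lgen k i, suppOf (chainI r (2*k)) with hA
  set B : Set ℝ := ⋃ r ∈ Lgen k i, suppOf r with hB
  set B' : Set ℝ := ⋃ r ∈ Lgen k (i+1), suppOf r with hB'
  have hAm : MeasurableSet A := measurable_finUnion _ (fun r => measurable_suppOf _)
  have hBm : MeasurableSet B := measurable_finUnion _ (fun r => measurable_suppOf _)
  have hB'm : MeasurableSet B' := measurable_finUnion _ (fun r => measurable_suppOf _)
  have hpt : ∀ x, muDensity k (i+1) x = muDensity k i x +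
      ((6:ℝ)^i * A.indicator (fun _ => 1) x + (6:ℝ)^(i+1) * B'.indicator (fun _ => 1) x
        - (6:ℝ)^i * B.indicator (fun _ => 1) x) := by
    intro x
    simp only [muDensity, Finset.sum_range_succ, ← hA, ← hB, ← hB']
    ring
  have h1 : IntegrableOn (muDensity k i) L := integrableOn_muDensity k i hLfin
  have hiA : IntegrableOn (fun x => (6:ℝ)^i * A.indicator (fun _ => (1:ℝ)) x) L :=
    (integrableOn_ind hAm hLfin).const_mul _
  have hiB : IntegrableOn (fun x => (6:ℝ)^i * B.indicator (fun _ => (1:ℝ)) x) L :=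
    (integrableOn_ind hBm hLfin).const_mul _
  have hiB' : IntegrableOn (fun x => (6:ℝ)^(i+1) * B'.indicator (fun _ => (1:ℝ)) x) L :=
    (integrableOn_ind hB'm hLfin).const_mul _
  have hzero : (∫ x in L, ((6:ℝ)^i * A.indicator (fun _ => 1) x
      + (6:ℝ)^(i+1) * B'.indicator (fun _ => 1) x
      - (6:ℝ)^i * B.indicator (fun _ => 1) x)) = 0 := by
    have hadd : IntegrableOn (fun x => (6:ℝ)^i * A.indicator (fun _ => (1:ℝ)) x
        + (6:ℝ)^(i+1) * B'.indicator (fun _ => (1:ℝ)) x) L := hiA.add hiB'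
    rw [integral_sub hadd hiB, integral_add hiA hiB',
      integral_const_mul, integral_const_mul, integral_const_mul,
      integral_ind_one hAm, integral_ind_one hBm, integral_ind_one hB'm]
    have hvA : volume (A ∩ L)
        = ∑ r ∈ (Lgen k i).filter (fun r => dyadicI r ⊆ dyadicI q),
            volume (suppOf (chainI r (2*k))) :=
      vol_inter_sum hq hij _ (fun r => (suppOf_subset _).trans (chain_subset r (2*k)))
        (fun r => measurable_suppOf _)
    have hvB : volume (B ∩ L)
        = ∑ r ∈ (Lgen k i).filter (fun r => dyadicI r ⊆ dyadicI q), volume (suppOf r) :=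
      vol_inter_sum hq hij _ suppOf_subset (fun r => measurable_suppOf _)
    have hvB' : volume (B' ∩ L)
        = ∑ r ∈ (Lgen k i).filter (fun r => dyadicI r ⊆ dyadicI q),
            ∑ t ∈ Finset.range (2*k), volume (suppOf (Lprime r t)) := by
      rw [vol_inter_sum hq (hij.trans (Nat.le_succ i)) _ suppOf_subset
        (fun r => measurable_suppOf _)]
      exact filter_succ_sum hq hij
    rw [hvA, hvB, hvB']
    rw [ENNReal.toReal_sum (fun r _ => by rw [vol_suppOf]; exact ENNReal.ofReal_ne_top),
      ENNReal.toReal_sum (fun r _ => ENNReal.sum_ne_top.2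
        (fun t _ => by rw [vol_suppOf]; exact ENNReal.ofReal_ne_top)),
      ENNReal.toReal_sum (fun r _ => by rw [vol_suppOf]; exact ENNReal.ofReal_ne_top)]
    rw [Finset.mul_sum, Finset.mul_sum, Finset.mul_sum, ← Finset.sum_add_distrib,
      ← Finset.sum_sub_distrib]
    apply Finset.sum_eq_zero
    intro r _
    rw [ENNReal.toReal_sum (fun t _ => by rw [vol_suppOf]; exact ENNReal.ofReal_ne_top),
      Finset.mul_sum]
    have := per_r k i r
    rw [Finset.mul_sum] at this
    linarith [this]
  calc (∫ x in L, muDensity k (i+1) x)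
      = ∫ x in L, (muDensity k i x +
        ((6:ℝ)^i * A.indicator (fun _ => 1) x + (6:ℝ)^(i+1) * B'.indicator (fun _ => 1) x
          - (6:ℝ)^i * B.indicator (fun _ => 1) x)) := by simp only [hpt]
    _ = (∫ x in L, muDensity k i x) + ∫ x in L, ((6:ℝ)^i * A.indicator (fun _ => 1) x
          + (6:ℝ)^(i+1) * B'.indicator (fun _ => 1) x
          - (6:ℝ)^i * B.indicator (fun _ => 1) x) :=
      integral_add h1 ((hiA.add hiB').sub hiB)
    _ = ∫ x in L, muDensity k i x := by rw [hzero, add_zero]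

/-- Measure preservation: for every stopping interval `L ∈ 𝓛_j`,
`μ_{j+1}(L) = μ_j(L)`, and consequently `μ_i(L) = μ_j(L)` for all `i ≥ j`. -/
theorem stmt15 (k : ℕ) (hk : 1 ≤ k) (j : ℕ) (q : ℤ × ℤ) (hq : q ∈ Lgen k j) :
    (∫ x in dyadicI q, muDensity k (j+1) x) = (∫ x in dyadicI q, muDensity k j x) ∧
    ∀ i : ℕ, j ≤ i →
      (∫ x in dyadicI q, muDensity k i x) = (∫ x in dyadicI q, muDensity k j x) := by
  refine ⟨key k le_rfl hq, ?_⟩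
  intro i hi
  induction i, hi using Nat.le_induction with
  | base => rfl
  | succ n hn ih => rw [key k hn hq, ih]
end

section
/- In the inductive construction, the stopping intervals at each stage satisfy ∑_{L ∈ L_j} |L| ≤ ((1 − 2^{-4k})/6)^j for all j ≥ 0. -/
open MeasureTheory Set

lemma vol_dyadic (q : ℤ × ℤ) : (volume (dyadicI q)).toReal = (2:ℝ)^q.1 := by
  have h2 : (0:ℝ) < (2:ℝ)^q.1 := zpow_pos (by norm_num) _
  rw [dyadicI, Real.volume_Ico]
  rw [show (2:ℝ)^q.1 * (q.2+1) - (2:ℝ)^q.1 * q.2 = (2:ℝ)^q.1 by ring]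
  exact ENNReal.toReal_ofReal h2.le

lemma sum_biUnion_le' {α β : Type*} [DecidableEq β] (s : Finset α) (t : α → Finset β)
    (f : β → ℝ) (hf : ∀ b, 0 ≤ f b) :
    ∑ b ∈ s.biUnion t, f b ≤ ∑ a ∈ s, ∑ b ∈ t a, f b := by
  classical
  refine Finset.induction_on s (by simp) ?_
  intro a s ha ih
  rw [Finset.biUnion_insert, Finset.sum_insert ha]
  have h1 : ∑ b ∈ t a ∪ s.biUnion t, f b ≤ ∑ b ∈ t a, f b + ∑ b ∈ s.biUnion t, f b := by
    have := Finset.sum_union_inter (s₁ := t a) (s₂ := s.biUnion t) (f := f)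
    have hnn : 0 ≤ ∑ b ∈ t a ∩ s.biUnion t, f b := Finset.sum_nonneg (fun b _ => hf b)
    linarith
  exact h1.trans (by linarith)

lemma step_sum (k : ℕ) (q : ℤ × ℤ) :
    ∑ i ∈ Finset.range (2*k), (2:ℝ)^(Lprime q i).1
      = (2:ℝ)^q.1 * ((1 - ((2:ℝ)^(4*k))⁻¹) / 6) := by
  have h1 : ∀ i : ℕ, (2:ℝ)^(Lprime q i).1 = (2:ℝ)^q.1 * 8⁻¹ * (4⁻¹:ℝ)^i := by
    intro i
    show (2:ℝ)^(q.1 - 2*(i:ℤ) - 3) = _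
    rw [show q.1 - 2*(i:ℤ) - 3 = q.1 - ((2*i+3 : ℕ) : ℤ) by push_cast; ring,
      zpow_sub₀ (by norm_num : (2:ℝ) ≠ 0), zpow_natCast, pow_add]
    rw [pow_mul, div_eq_mul_inv, mul_inv, inv_pow]
    norm_num
    ring
  rw [Finset.sum_congr rfl (fun i _ => h1 i), ← Finset.mul_sum]
  rw [geom_sum_eq (by norm_num : (4⁻¹:ℝ) ≠ 1)]
  have h4 : (4⁻¹:ℝ)^(2*k) = ((2:ℝ)^(4*k))⁻¹ := by
    rw [inv_pow, show (4:ℝ) = 2^2 by norm_num, ← pow_mul, show 2*(2*k) = 4*k by ring]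
  rw [h4]
  have : ((2:ℝ)^(4*k)) ≠ 0 := by positivity
  field_simp
  ring

/-- Total length of the stopping intervals of generation `j`:
`∑_{L ∈ 𝓛_j} |L| ≤ ((1 - 2^{-4k})/6)^j`. -/
theorem stmt17 (k : ℕ) (hk : 1 ≤ k) (j : ℕ) :
    ∑ q ∈ Lgen k j, (volume (dyadicI q)).toReal
      ≤ ((1 - ((2:ℝ)^(4*k))⁻¹) / 6)^j := by
  have hcnn : 0 ≤ (1 - ((2:ℝ)^(4*k))⁻¹) / 6 := by
    have : ((2:ℝ)^(4*k))⁻¹ ≤ 1 := by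
      rw [inv_le_one_iff₀]; right; exact one_le_pow₀ (by norm_num)
    linarith
  induction j with
  | zero => simp [Lgen, vol_dyadic]
  | succ j ih =>
    have hnn : ∀ q : ℤ × ℤ, 0 ≤ (volume (dyadicI q)).toReal := fun q => ENNReal.toReal_nonneg
    calc ∑ q ∈ Lgen k (j+1), (volume (dyadicI q)).toReal
        ≤ ∑ q ∈ Lgen k j, ∑ p ∈ (Finset.range (2*k)).image (Lprime q),
            (volume (dyadicI p)).toReal := sum_biUnion_le' _ _ _ hnn
      _ = ∑ q ∈ Lgen k j, ∑ i ∈ Finset.range (2*k),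
            (volume (dyadicI (Lprime q i))).toReal := by
          refine Finset.sum_congr rfl (fun q _ => ?_)
          refine Finset.sum_image ?_
          intro i _ j' _ h
          have := congrArg Prod.fst h
          simp only [Lprime, chainI] at this
          omega
      _ = ∑ q ∈ Lgen k j,
            (volume (dyadicI q)).toReal * ((1 - ((2:ℝ)^(4*k))⁻¹) / 6) := by
          refine Finset.sum_congr rfl (fun q _ => ?_)
          simp only [vol_dyadic]
          exact step_sum k q
      _ = (∑ q ∈ Lgen k j, (volume (dyadicI q)).toReal) * ((1 - ((2:ℝ)^(4*k))⁻¹) / 6) := by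
          rw [Finset.sum_mul]
      _ ≤ ((1 - ((2:ℝ)^(4*k))⁻¹) / 6)^j * ((1 - ((2:ℝ)^(4*k))⁻¹) / 6) :=
          mul_le_mul_of_nonneg_right ih hcnn
      _ = ((1 - ((2:ℝ)^(4*k))⁻¹) / 6)^(j+1) := by rw [pow_succ]
end
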